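/- Let u = e_{i_k}e_{i_{k-1}}⋯e_{i_1} be a primitive cycle of length k in a directed graph G and let λ be a complex number of modulus 1. On ℂ^k with orthonormal basis h_1,…,h_k (and with the convention h_{k+1} := λh_1), define φ_{u,λ}(x) = Σ_{j : s(e_{i_j})=x} h_j h_j* for each vertex x ∈ V(G) and φ_{u,λ}(e) = (1/2) Σ_{j : e_{i_j}=e} h_{j+1} h_j* for each edge e ∈ E(G) (so φ_{u,λ}(e) = 0 for edges not appearing in u). Then the representation φ_{u,λ} is irreducible: the algebra generated by {φ_{u,λ}(x) : x ∈ V(G)} ∪ {φ_{u,λ}(e) : e ∈ E(G)} is all of M_k(ℂ). -/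

import Mathlib

noncomputable section

/-! ## Countable directed graphs and their path spaces -/

/-- A countable directed graph: countable sets of vertices and edges together
with source and range maps. -/
structure DGraph : Type 1 where
  V : Type
  E : Type
  countV : Countable V
  countE : Countable E
  src : E → V
  rng : E → V

namespace DGraph

variable (G : DGraph)

instance : Countable G.V := G.countV
instance : Countable G.E := G.countE

/-- A path of positive length is a nonempty list of edges `[e_k, …, e_1]`
(written right to left) with `s(e_{i+1}) = r(e_i)`; a path of length zero is a vertex. -/
def Path : Type := G.V ⊕ {l : List G.E // l ≠ [] ∧ List.Chain' (fun a b => G.src a = G.rng b) l}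

instance : Countable G.Path := by
  unfold Path; infer_instance

/-- The source vertex of a path. -/
def psrc : G.Path → G.V
  | .inl x => x
  | .inr l => G.src (l.1.getLast l.2.1)

/-- The range vertex of a path. -/
def prng : G.Path → G.V
  | .inl x => x
  | .inr l => G.rng (l.1.head l.2.1)

/-- The product `p q` is defined exactly when `s(p) = r(q)`. -/
def Composable (p q : G.Path) : Prop := G.psrc p = G.prng q

/-- Composition of composable paths (`pcomp p q _` is the path "first `q`, then `p`"). -/
def pcomp : (p q : G.Path) → G.Composable p q → G.Path
  | .inl _, q, _ => q
  | .inr l, .inl _, _ => .inr l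
  | .inr l, .inr m, h => .inr ⟨l.1 ++ m.1, by
      refine ⟨by simp [l.2.1], l.2.2.append m.2.2 ?_⟩
      intro a ha b hb
      rw [List.getLast?_eq_getLast_of_ne_nil l.2.1, Option.mem_some_iff] at ha
      rw [List.head?_eq_head m.2.1, Option.mem_some_iff] at hb
      subst ha; subst hb
      exact h⟩

/-- The length of a path. -/
def plen : G.Path → ℕ
  | .inl _ => 0
  | .inr l => l.1.length

/-- The list of edges of a path (ordered from last edge traversed to first). -/
def pedges : G.Path → List G.E
  | .inl _ => []
  | .inr l => l.1

/-- A vertex regarded as a path of length zero. -/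
def vpath (x : G.V) : G.Path := .inl x

/-- An edge regarded as a path of length one. -/
def epath (e : G.E) : G.Path := .inr ⟨[e], by simp; first | exact List.IsChain.singleton e | exact List.chain'_singleton e | constructor⟩

/-- There is a directed path from `x` to `y`. -/
def Reach (x y : G.V) : Prop := ∃ p : G.Path, G.psrc p = x ∧ G.prng p = y

/-- `x` and `y` are adjacent in the underlying undirected graph. -/
def UAdj (x y : G.V) : Prop :=
  ∃ e : G.E, (G.src e = x ∧ G.rng e = y) ∨ (G.src e = y ∧ G.rng e = x)

/-- `x` and `y` lie in the same connected component of the underlying undirected graph. -/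
def SameUComp : G.V → G.V → Prop := Relation.ReflTransGen G.UAdj

/-- `G` is transitive in each component: any two vertices in the same connected component
of the underlying undirected graph are joined by a directed path. -/
def TransitiveInComponents : Prop := ∀ x y : G.V, G.SameUComp x y → G.Reach x y

/-- `x` and `y` are mutually reachable, i.e. lie in the same transitive component. -/
def MutReach (x y : G.V) : Prop := G.Reach x y ∧ G.Reach y x

/-- The vertex `x` supports a loop edge. -/
def HasLoop (x : G.V) : Prop := ∃ e : G.E, G.src e = x ∧ G.rng e = x

/-- The vertex `x` supports a cycle (a path of positive length from `x` to `x`). -/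
def OnCycle (x : G.V) : Prop := ∃ p : G.Path, 0 < G.plen p ∧ G.psrc p = x ∧ G.prng p = x

end DGraph

/-- The image of a vertex `x` under the representation `φ_{u,λ}` attached to a cycle
`u = e_{i_k} ⋯ e_{i_1}` (here `u j = e_{i_{j+1}}` for `j : Fin k`):
`φ_{u,λ}(x) = Σ_{j : s(e_{i_j}) = x} h_j h_j*`. -/
noncomputable def phiV (G : DGraph) {k : ℕ} (u : Fin k → G.E) (x : G.V) :
    Matrix (Fin k) (Fin k) ℂ :=
  Matrix.of fun a b =>
    haveI := Classical.propDecidable (a = b ∧ G.src (u a) = x)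
    if a = b ∧ G.src (u a) = x then 1 else 0

/-- The image of an edge `e` under the representation `φ_{u,λ}`:
`φ_{u,λ}(e) = (1/2) Σ_{j : e_{i_j} = e} h_{j+1} h_j*`, with the convention `h_{k+1} = λ h_1`
(so the wrap-around entry carries the coefficient `λ/2`). -/
noncomputable def phiE (G : DGraph) {k : ℕ} [NeZero k] (u : Fin k → G.E) (lam : ℂ)
    (e : G.E) : Matrix (Fin k) (Fin k) ℂ :=
  Matrix.of fun a b =>
    haveI := Classical.propDecidable (u b = e ∧ a = b + 1)
    if u b = e ∧ a = b + 1 then (if (b : ℕ) + 1 = k then lam / 2 else 1 / 2) else 0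

/-! ## Auxiliary material for the irreducibility proof -/

section DKAux

open Matrix Finset
open Fin.CommRing
open scoped Classical

variable (G : DGraph) {k : ℕ} [NeZero k] (u : Fin k → G.E) (lam : ℂ)

/-- The weight attached to position `b` in the weighted shift. -/
noncomputable def dkW (b : Fin k) : ℂ := if (b : ℕ) + 1 = k then lam / 2 else 1 / 2

lemma dkW_ne_zero (hlam : ‖lam‖ = 1) (b : Fin k) : dkW lam b ≠ 0 := by
  have h : lam ≠ 0 := by intro h; rw [h] at hlam; simp at hlam
  unfold dkW; split_ifs <;> simp [h]

lemma phiE_apply_eq (e : G.E) (a b : Fin k) :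
    phiE G u lam e a b = if u b = e ∧ a = b + 1 then dkW lam b else 0 := by
  unfold phiE dkW
  simp only [Matrix.of_apply]
  split_ifs <;> first | rfl | tauto

/-- Iterated products of the `phiE` matrices along the cycle starting at `j`. -/
noncomputable def dkP (j : Fin k) : ℕ → Matrix (Fin k) (Fin k) ℂ
  | 0 => 1
  | m + 1 => phiE G u lam (u (j + (m : Fin k))) * dkP j m

lemma dkP_apply (j : Fin k) (m : ℕ) (a b : Fin k) :
    dkP G u lam j m a b =
      if a = b + (m : Fin k) ∧ ∀ i < m, u (b + (i : Fin k)) = u (j + (i : Fin k))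
      then ∏ i ∈ Finset.range m, dkW lam (b + (i : Fin k)) else 0 := by
  induction m generalizing a with
  | zero => simp [dkP, Matrix.one_apply]
  | succ m ih =>
    rw [show dkP G u lam j (m + 1) = phiE G u lam (u (j + (m : Fin k))) * dkP G u lam j m
        from rfl,
      Matrix.mul_apply]
    rw [Finset.sum_eq_single (b + (m : Fin k))]
    · rw [ih, phiE_apply_eq]
      have hc : (((m + 1 : ℕ)) : Fin k) = (m : Fin k) + 1 := by push_cast; ring
      rw [hc]
      have hforall : (∀ i < m + 1, u (b + (i : Fin k)) = u (j + (i : Fin k))) ↔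
          ((∀ i < m, u (b + (i : Fin k)) = u (j + (i : Fin k))) ∧
            u (b + (m : Fin k)) = u (j + (m : Fin k))) := by
        constructor
        · intro h
          exact ⟨fun i hi => h i (hi.trans (Nat.lt_succ_self m)), h m (Nat.lt_succ_self m)⟩
        · rintro ⟨h1, h2⟩ i hi
          rcases Nat.lt_succ_iff_lt_or_eq.mp hi with h | h
          · exact h1 i h
          · subst h; exact h2
      simp only [hforall, Finset.prod_range_succ, eq_self_iff_true, true_and, ← add_assoc]
      split_ifs <;> first | tauto | ring
    · intro c _ hc
      rw [ih, if_neg (fun h => hc h.1), mul_zero]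
    · intro h; exact absurd (Finset.mem_univ _) h

/-- Periodicity argument: a full-cycle coincidence forces the starting points to agree. -/
lemma dk_period
    (hprim : ¬ ∃ m : ℕ, 0 < m ∧ m < k ∧ m ∣ k ∧
        ∀ j : Fin k, u (j + ⟨m % k, Nat.mod_lt m (Nat.pos_of_neZero k)⟩) = u j)
    {b j : Fin k} (h : ∀ i < k, u (b + (i : Fin k)) = u (j + (i : Fin k))) : b = j := by
  by_contra hne
  set d : Fin k := b - j with hd
  have hd0 : d ≠ 0 := fun h0 => hne (by rw [hd, sub_eq_zero] at h0; exact h0)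
  have hper : ∀ c : Fin k, u (c + d) = u c := by
    intro c
    have hi : ((c - j : Fin k) : ℕ) < k := (c - j).isLt
    have hc : c = j + (((c - j : Fin k) : ℕ) : Fin k) := by
      rw [Fin.cast_val_eq_self]; ring
    have hb : c + d = b + (((c - j : Fin k) : ℕ) : Fin k) := by
      rw [Fin.cast_val_eq_self, hd]; ring
    rw [hb, h _ hi, ← hc]
  have hn : ∀ (n : ℕ) (c : Fin k), u (c + n • d) = u c := by
    intro n
    induction n with
    | zero => intro c; simp
    | succ n ih =>
      intro c
      rw [succ_nsmul, ← add_assoc, hper, ih]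
  have hdval : (d : ℕ) ≠ 0 := by
    intro h0
    exact hd0 (Fin.ext (by simp [h0]))
  have hm0 : 0 < Nat.gcd (d : ℕ) k := Nat.gcd_pos_of_pos_left _ (Nat.pos_of_ne_zero hdval)
  have hmk : Nat.gcd (d : ℕ) k < k :=
    lt_of_le_of_lt (Nat.gcd_le_left _ (Nat.pos_of_ne_zero hdval)) d.isLt
  have hmdvd : Nat.gcd (d : ℕ) k ∣ k := Nat.gcd_dvd_right _ _
  have hcast : ((Nat.gcd (d : ℕ) k : ℕ) : Fin k) = d * ((Nat.gcdA (d : ℕ) k : ℤ) : Fin k) := by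
    have hbz := Nat.gcd_eq_gcd_ab (d : ℕ) k
    have h2 := congrArg (fun z : ℤ => (z : Fin k)) hbz
    push_cast at h2
    rw [Fin.natCast_self, zero_mul, add_zero] at h2
    exact h2
  have hmper : ∀ c : Fin k, u (c + ((Nat.gcd (d : ℕ) k : ℕ) : Fin k)) = u c := by
    intro c
    have hA : ((Nat.gcd (d : ℕ) k : ℕ) : Fin k)
        = ((((Nat.gcdA (d : ℕ) k : ℤ) : Fin k) : ℕ) : Fin k) * d := by
      rw [Fin.cast_val_eq_self, hcast, mul_comm]
    rw [hA, ← nsmul_eq_mul, hn]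
  refine hprim ⟨Nat.gcd (d : ℕ) k, hm0, hmk, hmdvd, fun j' => ?_⟩
  have heq : (⟨Nat.gcd (d : ℕ) k % k, Nat.mod_lt _ (Nat.pos_of_neZero k)⟩ : Fin k)
      = ((Nat.gcd (d : ℕ) k : ℕ) : Fin k) := by
    apply Fin.ext; simp [Fin.val_natCast]
  rw [heq]; exact hmper j'

lemma dk_unit_sandwich (M : Matrix (Fin k) (Fin k) ℂ) (i j : Fin k) :
    Matrix.single i i (1 : ℂ) * M * Matrix.single j j (1 : ℂ)
      = M i j • Matrix.single i j (1 : ℂ) := by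
  ext a b
  simp only [Matrix.mul_apply, Matrix.smul_apply, Matrix.single, Matrix.of_apply,
    smul_eq_mul]
  rw [Finset.sum_eq_single j]
  · rw [Finset.sum_eq_single i]
    · by_cases ha : i = a <;> by_cases hb : j = b <;> simp [ha, hb]
    · intro c _ hc
      simp [Ne.symm hc]
    · intro h; exact absurd (Finset.mem_univ _) h
  · intro c _ hc
    simp [Ne.symm hc]
  · intro h; exact absurd (Finset.mem_univ _) h

end DKAux

/-- **Lemma (Davidson–Katsoulis, Lemma 3).**
If `u` is a primitive cycle of length `k ≥ 1` in a directed graph `G` and `λ ∈ 𝕋`, then the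
representation `φ_{u,λ}` is irreducible: the algebra generated by the images of the vertices
and the edges is all of `M_k(ℂ)`. -/
theorem phi_u_lambda_irreducible (G : DGraph) (k : ℕ) [NeZero k] (u : Fin k → G.E)
    (hcycle : ∀ j : Fin k, G.rng (u j) = G.src (u (j + 1)))
    (hprimitive : ¬ ∃ m : ℕ, 0 < m ∧ m < k ∧ m ∣ k ∧
        ∀ j : Fin k, u (j + ⟨m % k, Nat.mod_lt m (Nat.pos_of_neZero k)⟩) = u j)
    (lam : ℂ) (hlam : ‖lam‖ = 1) :
    Algebra.adjoin ℂ
        ((Set.range fun x : G.V => phiV G u x) ∪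
          (Set.range fun e : G.E => phiE G u lam e)) = ⊤ := by
  classical
  letI := Fin.instCommRing k
  set A := Algebra.adjoin ℂ
      ((Set.range fun x : G.V => phiV G u x) ∪
        (Set.range fun e : G.E => phiE G u lam e)) with hA
  have hEmem : ∀ e : G.E, phiE G u lam e ∈ A :=
    fun e => Algebra.subset_adjoin (Or.inr ⟨e, rfl⟩)
  have hPmem : ∀ (j : Fin k) (m : ℕ), dkP G u lam j m ∈ A := by
    intro j m
    induction m with
    | zero => exact one_mem _
    | succ m ih => exact mul_mem (hEmem _) ih
  have hWne : ∀ b : Fin k, dkW lam b ≠ 0 := dkW_ne_zero lam hlam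
  -- diagonal matrix units
  have hdiag : ∀ j : Fin k, Matrix.single j j (1 : ℂ) ∈ A := by
    intro j
    set c : ℂ := ∏ i ∈ Finset.range k, dkW lam (j + (i : Fin k)) with hc
    have hcne : c ≠ 0 := Finset.prod_ne_zero_iff.mpr fun i _ => hWne _
    have hPk : dkP G u lam j k = c • Matrix.single j j (1 : ℂ) := by
      ext a b
      rw [dkP_apply, Fin.natCast_self, add_zero]
      by_cases h1 : a = b ∧ ∀ i < k, u (b + (i : Fin k)) = u (j + (i : Fin k))
      · obtain ⟨ha, hf⟩ := h1
        have hbj : b = j := dk_period G u hprimitive hf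
        subst hbj; subst ha
        rw [if_pos ⟨rfl, hf⟩]
        simp [Matrix.single, hc]
      · rw [if_neg h1]
        by_cases hab : a = j ∧ b = j
        · obtain ⟨ha2, hb2⟩ := hab
          subst ha2
          exact absurd ⟨hb2.symm, fun i _ => by rw [hb2]⟩ h1
        · have : ¬ (j = a ∧ j = b) := fun h => hab ⟨h.1.symm, h.2.symm⟩
          simp [Matrix.single, this]
    have heq : Matrix.single j j (1 : ℂ) = c⁻¹ • dkP G u lam j k := by
      rw [hPk, smul_smul, inv_mul_cancel₀ hcne, one_smul]
    rw [heq]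
    exact Subalgebra.smul_mem _ (hPmem j k) _
  -- first subdiagonal matrix units
  have hsub : ∀ b : Fin k, Matrix.single (b + 1) b (1 : ℂ) ∈ A := by
    intro b
    have hval : phiE G u lam (u b) (b + 1) b = dkW lam b := by
      rw [phiE_apply_eq, if_pos ⟨rfl, rfl⟩]
    have hsand := dk_unit_sandwich (phiE G u lam (u b)) (b + 1) b
    rw [hval] at hsand
    have heq : Matrix.single (b + 1) b (1 : ℂ)
        = (dkW lam b)⁻¹ • (Matrix.single (b + 1) (b + 1) (1 : ℂ) * phiE G u lam (u b) *
            Matrix.single b b (1 : ℂ)) := by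
      rw [hsand, smul_smul, inv_mul_cancel₀ (hWne b), one_smul]
    rw [heq]
    exact Subalgebra.smul_mem _ (mul_mem (mul_mem (hdiag _) (hEmem _)) (hdiag _)) _
  -- all matrix units
  have hshift : ∀ (n : ℕ) (b : Fin k), Matrix.single (b + (n : Fin k)) b (1 : ℂ) ∈ A := by
    intro n
    induction n with
    | zero => intro b; simpa using hdiag b
    | succ n ih =>
      intro b
      have h1 : (((n + 1 : ℕ)) : Fin k) = (n : Fin k) + 1 := by push_cast; ring
      have h2 : Matrix.single (b + (n : Fin k) + 1) (b + (n : Fin k)) (1 : ℂ) *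
          Matrix.single (b + (n : Fin k)) b (1 : ℂ)
          = Matrix.single (b + ((n + 1 : ℕ) : Fin k)) b (1 : ℂ) := by
        rw [Matrix.single_mul_single_same, one_mul, h1, add_assoc]
      rw [← h2]
      exact mul_mem (hsub _) (ih b)
  have hall : ∀ a b : Fin k, Matrix.single a b (1 : ℂ) ∈ A := by
    intro a b
    have h1 : a = b + (((a - b : Fin k) : ℕ) : Fin k) := by
      rw [Fin.cast_val_eq_self]; ring
    rw [h1]
    exact hshift _ b
  -- conclude
  rw [eq_top_iff]
  rintro M -
  rw [Matrix.matrix_eq_sum_single M]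
  refine sum_mem fun i _ => sum_mem fun j _ => ?_
  have h1 : Matrix.single i j (M i j) = (M i j) • Matrix.single i j (1 : ℂ) := by
    rw [Matrix.smul_single, smul_eq_mul, mul_one]
  rw [h1]
  exact Subalgebra.smul_mem _ (hall i j) _
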